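/- Let D be a commutative ring and I an ideal with p ∈ I. Then the set J_max := { x ∈ D : x^{p^m} ∈ I } is an ideal of D. Moreover, J_max^{(p^m)} + p·J_max ⊆ I, and any ideal J of D with J^{(p^m)} ⊆ I satisfies J ⊆ J_max; i.e., J_max is the largest ideal J with J^{(p^m)} + pJ ⊆ I. If moreover I admits a divided power structure (so that x^{p^m} = (p^m)!·γ_{p^m}(x) ∈ I for x ∈ I), then I ⊆ J_max. -/

import Mathlib

/-- `J_max = {x : x^(p^m) ∈ I}` is an ideal, satisfies `J_max^{(p^m)} + p·J_max ⊆ I`, is the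
largest ideal `J` with `J^{(p^m)} ⊆ I`, and contains `I` if `I` has divided powers. -/
theorem stmt8 (p : ℕ) (hp : p.Prime) (m : ℕ) {D : Type*} [CommRing D]
    (I : Ideal D) (hpI : (p : D) ∈ I) :
    ∃ Jmax : Ideal D,
      (∀ x : D, x ∈ Jmax ↔ x ^ p ^ m ∈ I) ∧
      Ideal.span ((fun x => x ^ p ^ m) '' (Jmax : Set D))
          ⊔ Ideal.span {(p : D)} * Jmax ≤ I ∧
      (∀ J : Ideal D, Ideal.span ((fun x => x ^ p ^ m) '' (J : Set D)) ≤ I → J ≤ Jmax) ∧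
      ((∀ x ∈ I, ∃ y ∈ I, x ^ p ^ m = ((p ^ m).factorial : D) * y) → I ≤ Jmax) := by
  refine ⟨{ carrier := {x : D | x ^ p ^ m ∈ I}
            zero_mem' := by
              simp only [Set.mem_setOf_eq]
              rw [zero_pow (pow_ne_zero m hp.ne_zero)]
              exact I.zero_mem
            add_mem' := by
              intro a b ha hb
              simp only [Set.mem_setOf_eq] at *
              rw [add_pow]
              refine Ideal.sum_mem _ fun i hi => ?_
              rcases eq_or_ne i 0 with rfl | h0
              · simpa using hb
              rcases eq_or_ne i (p ^ m) with rfl | hn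
              · simpa using ha
              · obtain ⟨k, hk⟩ := hp.dvd_choose_pow h0 hn
                rw [hk]
                push_cast
                exact I.mul_mem_left _ (I.mul_mem_right _ hpI)
            smul_mem' := by
              intro c x hx
              simp only [Set.mem_setOf_eq, smul_eq_mul] at *
              rw [mul_pow]
              exact I.mul_mem_left _ hx }, fun x => Iff.rfl, ?_, ?_, ?_⟩
  · refine sup_le ((Ideal.span_le).2 ?_) ?_
    · rintro _ ⟨x, hx, rfl⟩
      exact hx
    · exact (Ideal.mul_le_left).trans
        ((Ideal.span_le).2 (Set.singleton_subset_iff.2 hpI))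
  · intro J hJ x hx
    exact hJ (Ideal.subset_span ⟨x, hx, rfl⟩)
  · intro h x hx
    obtain ⟨y, hy, hxy⟩ := h x hx
    show x ^ p ^ m ∈ I
    rw [hxy]
    exact I.mul_mem_left _ hy
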